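/- For any poset P, either there exists a constant K_P such that sat*(n, P) ≤ K_P for all n, or sat*(n, P) ≥ 2√(n-2) for all n ∈ ℕ with n ≥ 2. -/

import Mathlib

/-- `φ` is an induced-copy map of the poset `P` into the family `F`
(posets are finite collections of finite subsets of `ℕ`, ordered by inclusion). -/
def IsCopyMap (P F : Finset (Finset ℕ)) (φ : Finset ℕ → Finset ℕ) : Prop :=
  Set.InjOn φ ↑P ∧ (∀ A ∈ P, φ A ∈ F) ∧ ∀ A ∈ P, ∀ B ∈ P, (φ A ⊆ φ B ↔ A ⊆ B)

/-- `F` contains an induced copy of the poset `P`. -/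
def ContainsInduced (P F : Finset (Finset ℕ)) : Prop := ∃ φ, IsCopyMap P F φ

/-- `F ⊆ 2^[n]` is induced `P`-saturated. -/
def InducedSaturated (n : ℕ) (P F : Finset (Finset ℕ)) : Prop :=
  (∀ A ∈ F, A ⊆ Finset.Icc 1 n) ∧ ¬ ContainsInduced P F ∧
  ∀ S ⊆ Finset.Icc 1 n, S ∉ F → ContainsInduced P (insert S F)

/-- `P` has legs `L1, L2` and hip `H`. -/
def LegsAt (P : Finset (Finset ℕ)) (L1 L2 H : Finset ℕ) : Prop :=
  L1 ∈ P ∧ L2 ∈ P ∧ H ∈ P ∧ L1 ≠ L2 ∧ L1 ≠ H ∧ L2 ≠ H ∧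
  ¬ L1 ⊆ L2 ∧ ¬ L2 ⊆ L1 ∧ L1 ⊆ H ∧ L2 ⊆ H ∧
  ∀ A ∈ P, A ≠ L1 → A ≠ L2 → A ≠ H → H ⊆ A

/-- `P` has legs. -/
def HasLegs (P : Finset (Finset ℕ)) : Prop := ∃ L1 L2 H, LegsAt P L1 L2 H

/-- `sat*(n, P)`: the minimum size of an induced `P`-saturated family in `2^[n]`. -/
noncomputable def satStar (n : ℕ) (P : Finset (Finset ℕ)) : ℕ :=
  sInf {k | ∃ F : Finset (Finset ℕ), InducedSaturated n P F ∧ F.card = k}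

open Finset

namespace Dicho

variable {α : Type*} [DecidableEq α]

def Step (E : Finset (α × α)) : α → α → Prop := fun a b => (a, b) ∈ E

def Reach (E : Finset (α × α)) : α → α → Prop := Relation.ReflTransGen (Step E)

def Good (V : Finset α) (E : Finset (α × α)) : Prop :=
  ∀ e ∈ E, e.1 ∈ V ∧ e.2 ∈ V ∧ e.1 ≠ e.2

def NoAlt (E : Finset (α × α)) : Prop :=
  ∀ e ∈ E, ¬ Reach (E.erase e) e.1 e.2

def Cyc (E : Finset (α × α)) : Prop := ∃ e ∈ E, Reach E e.2 e.1

omit [DecidableEq α] in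
lemma reach_mono {E E' : Finset (α × α)} (h : E ⊆ E') {a b : α}
    (hr : Reach E a b) : Reach E' a b :=
  (Relation.ReflTransGen.mono (fun _ _ hx => h hx) :
    Relation.ReflTransGen (Step E) ≤ Relation.ReflTransGen (Step E')) a b hr

lemma noAlt_mono {E E' : Finset (α × α)} (h : E ⊆ E') (hE' : NoAlt E') : NoAlt E := by
  intro e he hre
  exact hE' e (h he) (reach_mono (Finset.erase_subset_erase _ h) hre)

omit [DecidableEq α] in
lemma cyc_mono {E E' : Finset (α × α)} (h : E ⊆ E') (hc : Cyc E) : Cyc E' := by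
  obtain ⟨e, he, hr⟩ := hc
  exact ⟨e, h he, reach_mono h hr⟩

omit [DecidableEq α] in
lemma pne₂ {x y z : α} (h : y ≠ z) : (x, y) ≠ (x, z) :=
  fun hh => h (congrArg Prod.snd hh)

omit [DecidableEq α] in
lemma pne₁ {x y z : α} (h : x ≠ z) : (x, y) ≠ (z, y) :=
  fun hh => h (congrArg Prod.fst hh)

/-- Two-step alternative route gives a NoAlt violation. -/
lemma noalt_two {E : Finset (α × α)} (hNA : NoAlt E) {x y z : α}
    (h1 : (x, y) ∈ E) (h2 : (y, z) ∈ E) (h3 : (x, z) ∈ E)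
    (hne1 : (x, y) ≠ (x, z)) (hne2 : (y, z) ≠ (x, z)) : False := by
  apply hNA (x, z) h3
  exact Relation.ReflTransGen.head (Finset.mem_erase.2 ⟨hne1, h1⟩)
    (Relation.ReflTransGen.single (Finset.mem_erase.2 ⟨hne2, h2⟩))

/-- The DAG case bound: an acyclic no-alternative-route digraph has at most m²/4 arcs. -/
lemma dag_bound (n : ℕ) : ∀ (V : Finset α) (E : Finset (α × α)),
    V.card ≤ n → Good V E → NoAlt E → ¬ Cyc E →
    4 * E.card ≤ V.card * V.card := by
  induction n with
  | zero =>
    intro V E hcard hG _ _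
    have : E = ∅ := by
      by_contra h
      obtain ⟨e, he⟩ := Finset.nonempty_iff_ne_empty.2 h
      have h1 := (hG e he).1
      have h2 := Finset.card_pos.2 ⟨e.1, h1⟩
      omega
    simp [this]
  | succ n ih =>
    intro V E hcard hG hNA hNC
    rcases Finset.eq_empty_or_nonempty E with rfl | ⟨e, he⟩
    · simp
    obtain ⟨u, v⟩ := e
    obtain ⟨hu, hv, huv⟩ := hG (u, v) he
    classical
    set touch := E.filter (fun a => a.1 = u ∨ a.1 = v ∨ a.2 = u ∨ a.2 = v) with htouch
    set rest := E.filter (fun a => ¬ (a.1 = u ∨ a.1 = v ∨ a.2 = u ∨ a.2 = v)) with hrest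
    have hsplit : touch.card + rest.card = E.card :=
      Finset.card_filter_add_card_filter_not _
    set V' := (V.erase u).erase v with hV'
    have hvmem : v ∈ V.erase u := Finset.mem_erase.2 ⟨Ne.symm huv, hv⟩
    have hV2 : 2 ≤ V.card := Finset.one_lt_card.2 ⟨u, hu, v, hv, huv⟩
    have hV'card : V'.card + 2 = V.card := by
      rw [hV', Finset.card_erase_of_mem hvmem, Finset.card_erase_of_mem hu]
      omega
    have hGrest : Good V' rest := by
      intro a ha
      rw [hrest, Finset.mem_filter] at ha
      obtain ⟨haE, hap⟩ := ha
      push_neg at hap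
      obtain ⟨h1, h2, h3, h4⟩ := hap
      obtain ⟨ha1, ha2, hane⟩ := hG a haE
      exact ⟨Finset.mem_erase.2 ⟨h2, Finset.mem_erase.2 ⟨h1, ha1⟩⟩,
        Finset.mem_erase.2 ⟨h4, Finset.mem_erase.2 ⟨h3, ha2⟩⟩, hane⟩
    have hrsub : rest ⊆ E := Finset.filter_subset _ _
    have hIH : 4 * rest.card ≤ V'.card * V'.card := by
      apply ih V' rest _ hGrest (noAlt_mono hrsub hNA) (fun hc => hNC (cyc_mono hrsub hc))
      omega
    have no2 : ∀ x y : α, (x, y) ∈ E → (y, x) ∈ E → False := by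
      intro x y h1 h2
      exact hNC ⟨(x, y), h1, Relation.ReflTransGen.single h2⟩
    have no3 : ∀ x y z : α, (x,y) ∈ E → (y,z) ∈ E → (z,x) ∈ E → False := by
      intro x y z h1 h2 h3
      exact hNC ⟨(x, y), h1, Relation.ReflTransGen.head h2 (Relation.ReflTransGen.single h3)⟩
    -- injection of touch into V.erase v
    have htb : touch.card ≤ V.card - 1 := by
      have hc1 : (V.erase v).card = V.card - 1 := Finset.card_erase_of_mem hv
      rw [← hc1]
      apply Finset.card_le_card_of_injOn
        (fun a => if a = (u, v) then u else if a.1 = u ∨ a.1 = v then a.2 else a.1)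
      · -- maps into V.erase v
        intro a ha
        beta_reduce
        rw [Finset.mem_coe, htouch, Finset.mem_filter] at ha
        obtain ⟨haE, hap⟩ := ha
        obtain ⟨ha1, ha2, hane⟩ := hG a haE
        by_cases h1 : a = (u, v)
        · simp only [h1, if_pos rfl]
          exact Finset.mem_erase.2 ⟨huv, hu⟩
        · rw [if_neg h1]
          by_cases h2 : a.1 = u ∨ a.1 = v
          · rw [if_pos h2]
            refine Finset.mem_erase.2 ⟨?_, ha2⟩
            intro hav
            rcases h2 with h2 | h2
            · exact h1 (Prod.ext h2 hav)
            · exact hane (h2.trans hav.symm)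
          · rw [if_neg h2]
            push_neg at h2
            refine Finset.mem_erase.2 ⟨h2.2, ha1⟩
      · -- injective
        intro a ha b hb hab
        simp only [] at hab
        obtain ⟨haE, hap⟩ := Finset.mem_filter.1 (Finset.mem_coe.1 ha)
        obtain ⟨hbE, hbp⟩ := Finset.mem_filter.1 (Finset.mem_coe.1 hb)
        have noloopa : a.1 ≠ a.2 := (hG a haE).2.2
        have noloopb : b.1 ≠ b.2 := (hG b hbE).2.2
        by_cases h1 : a = (u, v) <;> by_cases h2 : b = (u, v)
        · exact h1.trans h2.symm
        · -- a = (u,v), b ≠ ; value u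
          exfalso
          rw [if_pos h1, if_neg h2] at hab
          by_cases h3 : b.1 = u ∨ b.1 = v
          · rw [if_pos h3] at hab
            -- b.2 = u
            rcases h3 with h3 | h3
            · exact noloopb (h3.trans hab)
            · -- b = (v, u) : 2-cycle
              have : b = (v, u) := Prod.ext h3 hab.symm
              exact no2 u v he (this ▸ hbE)
          · rw [if_neg h3] at hab
            push_neg at h3
            exact h3.1 hab.symm
        · -- symmetric
          exfalso
          rw [if_neg h1, if_pos h2] at hab
          by_cases h3 : a.1 = u ∨ a.1 = v
          · rw [if_pos h3] at hab
            rcases h3 with h3 | h3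
            · exact noloopa (h3.trans hab.symm)
            · have : a = (v, u) := Prod.ext h3 hab
              exact no2 u v he (this ▸ haE)
          · rw [if_neg h3] at hab
            push_neg at h3
            exact h3.1 hab
        · -- both ≠ (u,v)
          rw [if_neg h1, if_neg h2] at hab
          by_cases h3 : a.1 = u ∨ a.1 = v <;> by_cases h4 : b.1 = u ∨ b.1 = v
          · -- both head-type: a = (a1, w), b = (b1, w), a1,b1 ∈ {u,v}
            rw [if_pos h3] at hab; rw [if_pos h4] at hab
            -- a.2 = b.2 =: w
            by_cases h5 : a.1 = b.1
            · exact Prod.ext h5 hab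
            exfalso
            -- {a.1, b.1} = {u, v}; arcs (u,w),(v,w) and (u,v) ∈ E: TT violation
            have hw : a.2 ≠ v := by
              intro hav
              rcases h3 with h3 | h3
              · exact h1 (Prod.ext h3 hav)
              · exact noloopa (h3.trans hav.symm)
            have hw2 : b.2 ≠ v := by
              intro hbv
              rcases h4 with h4 | h4
              · exact h2 (Prod.ext h4 hbv)
              · exact noloopb (h4.trans hbv.symm)
            -- one of a,b starts at u, other at v
            rcases h3 with h3 | h3 <;> rcases h4 with h4 | h4
            · exact h5 (h3.trans h4.symm)
            · -- a = (u,w), b = (v,w): violation of (u, a.2)? arcs (u,v),(v,w),(u,w)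
              have haeq : a = (u, a.2) := Prod.ext h3 rfl
              have hbeq : b = (v, a.2) := Prod.ext h4 hab.symm
              exact noalt_two hNA he (hbeq ▸ hbE) (haeq ▸ haE) (pne₂ (Ne.symm hw)) (pne₁ (Ne.symm huv))
            · have haeq : a = (v, a.2) := Prod.ext h3 rfl
              have hbeq : b = (u, a.2) := Prod.ext h4 hab.symm
              exact noalt_two hNA he (haeq ▸ haE) (hbeq ▸ hbE) (pne₂ (Ne.symm hw)) (pne₁ (Ne.symm huv))
            · exact h5 (h3.trans h4.symm)
          · -- a head-type (x, w); b tail-type (w, y) with y ∈ {u,v}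
            rw [if_pos h3, if_neg h4] at hab
            exfalso
            -- a.2 = b.1 = w ∉ {u,v}
            push_neg at h4
            have hby : b.2 = u ∨ b.2 = v := by
              rcases hbp with h | h | h | h
              · exact absurd h h4.1
              · exact absurd h h4.2
              · exact Or.inl h
              · exact Or.inr h
            have hw1 : a.2 ≠ u := fun hh => h4.1 (hab ▸ hh)
            have hw2 : a.2 ≠ v := fun hh => h4.2 (hab ▸ hh)
            rcases h3 with h3 | h3 <;> rcases hby with hby | hby
            all_goals {
              first
              | { have haeq : a = (u, a.2) := Prod.ext h3 rfl
                  have hbeq : b = (a.2, u) := Prod.ext hab.symm hby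
                  exact no2 u a.2 (haeq ▸ haE) (hbeq ▸ hbE) }
              | { have haeq : a = (u, a.2) := Prod.ext h3 rfl
                  have hbeq : b = (a.2, v) := Prod.ext hab.symm hby
                  exact noalt_two hNA (haeq ▸ haE) (hbeq ▸ hbE) he (pne₂ hw2) (pne₁ hw1) }
              | { have haeq : a = (v, a.2) := Prod.ext h3 rfl
                  have hbeq : b = (a.2, u) := Prod.ext hab.symm hby
                  exact no3 u v a.2 he (haeq ▸ haE) (hbeq ▸ hbE) }
              | { have haeq : a = (v, a.2) := Prod.ext h3 rfl
                  have hbeq : b = (a.2, v) := Prod.ext hab.symm hby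
                  exact no2 v a.2 (haeq ▸ haE) (hbeq ▸ hbE) } }
          · -- symmetric: a tail-type, b head-type
            rw [if_neg h3, if_pos h4] at hab
            exfalso
            push_neg at h3
            have hay : a.2 = u ∨ a.2 = v := by
              rcases hap with h | h | h | h
              · exact absurd h h3.1
              · exact absurd h h3.2
              · exact Or.inl h
              · exact Or.inr h
            have hw1 : b.2 ≠ u := fun hh => h3.1 (hab.symm ▸ hh)
            have hw2 : b.2 ≠ v := fun hh => h3.2 (hab.symm ▸ hh)
            rcases h4 with h4 | h4 <;> rcases hay with hay | hay
            all_goals {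
              first
              | { have hbeq : b = (u, b.2) := Prod.ext h4 rfl
                  have haeq : a = (b.2, u) := Prod.ext hab hay
                  exact no2 u b.2 (hbeq ▸ hbE) (haeq ▸ haE) }
              | { have hbeq : b = (u, b.2) := Prod.ext h4 rfl
                  have haeq : a = (b.2, v) := Prod.ext hab hay
                  exact noalt_two hNA (hbeq ▸ hbE) (haeq ▸ haE) he (pne₂ hw2) (pne₁ hw1) }
              | { have hbeq : b = (v, b.2) := Prod.ext h4 rfl
                  have haeq : a = (b.2, u) := Prod.ext hab hay
                  exact no3 u v b.2 he (hbeq ▸ hbE) (haeq ▸ haE) }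
              | { have hbeq : b = (v, b.2) := Prod.ext h4 rfl
                  have haeq : a = (b.2, v) := Prod.ext hab hay
                  exact no2 v b.2 (hbeq ▸ hbE) (haeq ▸ haE) } }
          · -- both tail-type: a = (w, x), b = (w, y), x ≠ y ∈ {u,v}
            rw [if_neg h3, if_neg h4] at hab
            by_cases h5 : a.2 = b.2
            · exact Prod.ext hab h5
            exfalso
            push_neg at h3; push_neg at h4
            have hax : a.2 = u ∨ a.2 = v := by
              rcases hap with h | h | h | h
              · exact absurd h h3.1
              · exact absurd h h3.2
              · exact Or.inl h
              · exact Or.inr h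
            have hbx : b.2 = u ∨ b.2 = v := by
              rcases hbp with h | h | h | h
              · exact absurd h h4.1
              · exact absurd h h4.2
              · exact Or.inl h
              · exact Or.inr h
            rcases hax with hax | hax <;> rcases hbx with hbx | hbx
            · exact h5 (hax.trans hbx.symm)
            · -- a = (w,u), b = (w,v): TT for (w,v): w→u→v
              have haeq : a = (a.1, u) := Prod.ext rfl hax
              have hbeq : b = (a.1, v) := Prod.ext hab.symm hbx
              exact noalt_two hNA (haeq ▸ haE) he (hbeq ▸ hbE)
                (pne₂ huv) (pne₁ (fun hh => h3.1 hh.symm))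
            · -- a = (w,v), b = (w,u): TT for (w,v) using b: w→u, u→v
              have hbeq : b = (a.1, u) := Prod.ext hab.symm hbx
              have haeq : a = (a.1, v) := Prod.ext rfl hax
              exact noalt_two hNA (hbeq ▸ hbE) he (haeq ▸ haE)
                (pne₂ huv) (pne₁ (fun hh => h3.1 hh.symm))
            · exact h5 (hax.trans hbx.symm)
    -- assemble
    have harith : ∀ r : ℕ, 4 * ((r + 2) - 1) + r * r = (r + 2) * (r + 2) := by
      intro r; ring_nf; omega
    have hVc : V.card = V'.card + 2 := hV'card.symm
    calc 4 * E.card = 4 * touch.card + 4 * rest.card := by omega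
    _ ≤ 4 * (V.card - 1) + V'.card * V'.card := by omega
    _ = V.card * V.card := by rw [hVc]; exact harith V'.card

/-- The bound function. -/
def Bnd (m : ℕ) : ℕ := if m ≤ 1 then 0 else if m = 2 then 2 else m * m / 4 + 2

lemma sq_mod_four (a : ℕ) : a * a % 4 ≤ 1 := by
  rcases Nat.even_or_odd a with ⟨b, rfl⟩ | ⟨b, rfl⟩
  · have h : (b + b) * (b + b) = 4 * (b * b) := by ring
    omega
  · have h : (2 * b + 1) * (2 * b + 1) = 4 * (b * b + b) + 1 := by ring
    omega

lemma quarter_le {a b : ℕ} (h : 4 * a ≤ b) : a ≤ b / 4 := by omega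

lemma bnd_step {m k : ℕ} (h2 : 2 ≤ k) (hk : k ≤ m) : Bnd (m - k + 1) + k ≤ Bnd m := by
  set q := m - k + 1 with hq
  have hq1 : 1 ≤ q := by omega
  have hqk : q + k = m + 1 := by omega
  rcases Nat.lt_or_ge q 3 with hq3 | hq3
  · -- q = 1 or q = 2
    have hB1 : Bnd 1 = 0 := by norm_num [Bnd]
    have hB2 : Bnd 2 = 2 := by norm_num [Bnd]
    have hBbig : ∀ j, 3 ≤ j → Bnd j = j * j / 4 + 2 := by
      intro j hj; unfold Bnd; rw [if_neg (by omega), if_neg (by omega)]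
    have hquart : ∀ j, 3 ≤ j → j - 1 ≤ j * j / 4 := by
      intro j hj
      obtain ⟨d, rfl⟩ : ∃ d, j = d + 3 := ⟨j - 3, by omega⟩
      have he : (d + 3) * (d + 3) = 4 * (d + 2) + (d * d + 2 * d + 1) := by ring
      have := quarter_le (a := d + 2) (b := (d+3)*(d+3)) (by omega)
      omega
    interval_cases q
    · -- q = 1 : k = m
      have hkm : k = m := by omega
      subst hkm
      rw [hB1]
      rcases Nat.lt_or_ge k 3 with h3 | h3
      · have : k = 2 := by omega
        rw [this, hB2]
      · rw [hBbig k h3]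
        have := hquart k h3
        omega
    · -- q = 2 : k = m - 1
      have hm3 : 3 ≤ m := by omega
      rw [hB2, hBbig m hm3]
      have := hquart m hm3
      omega
  · -- 3 ≤ q, so 4 ≤ m
    have hm4 : 4 ≤ m := by omega
    have hd : 1 ≤ m - q := by omega
    obtain ⟨d, hdm⟩ : ∃ d, m = q + d := ⟨m - q, by omega⟩
    have hd1 : 1 ≤ d := by omega
    have hexp : m * m = q * q + (2 * (q * d) + d * d) := by rw [hdm]; ring
    have h6 : 6 * d ≤ 2 * (q * d) := by
      have : 3 * d ≤ q * d := Nat.mul_le_mul_right d hq3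
      omega
    have hdd : d ≤ d * d := Nat.le_mul_of_pos_left d (by omega)
    have hmq := sq_mod_four m
    have hqq := sq_mod_four q
    have hBq : Bnd q = q * q / 4 + 2 := by unfold Bnd; rw [if_neg (by omega), if_neg (by omega)]
    have hBm : Bnd m = m * m / 4 + 2 := by unfold Bnd; rw [if_neg (by omega), if_neg (by omega)]
    rw [hBq, hBm]
    -- linearize
    generalize hQ : q * q = QQ at hexp hqq
    generalize hM : m * m = MM at hexp hmq
    generalize hP : 2 * (q * d) = P at hexp h6
    generalize hD : d * d = D at hexp hdd
    omega

lemma mmdiv4_le_bnd (m : ℕ) : m * m / 4 ≤ Bnd m := by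
  by_cases h1 : m ≤ 1
  · interval_cases m <;> simp [Bnd]
  · by_cases h2 : m = 2
    · subst h2; norm_num [Bnd]
    · have h : Bnd m = m * m / 4 + 2 := by unfold Bnd; rw [if_neg h1, if_neg h2]
      omega

theorem digraph_bound (n : ℕ) : ∀ (V : Finset α) (E : Finset (α × α)),
    V.card ≤ n → Good V E → NoAlt E → E.card ≤ Bnd V.card := by
  induction n with
  | zero =>
    intro V E hcard hG hNA
    have hE : E = ∅ := by
      by_contra h
      obtain ⟨e, he⟩ := Finset.nonempty_iff_ne_empty.2 h
      have h1 := (hG e he).1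
      have h2 := Finset.card_pos.2 ⟨e.1, h1⟩
      omega
    simp [hE]
  | succ n ih =>
    intro V E hcard hG hNA
    by_cases hC : Cyc E
    case neg =>
      have h4 := dag_bound V.card V E le_rfl hG hNA hC
      exact le_trans (quarter_le h4) (mmdiv4_le_bnd V.card)
    case pos =>
      classical
      obtain ⟨e₀, he₀, hr₀⟩ := hC
      set u := e₀.1 with hu
      set v := e₀.2 with hv
      have he₀' : (u, v) ∈ E := by rw [hu, hv]; exact he₀
      obtain ⟨huV, hvV, huvne⟩ := hG e₀ he₀
      -- the SCC of v is out-complete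
      set OC := V.powerset.filter (fun W => W.Nonempty ∧ ∀ x ∈ W, ∃ y ∈ W, (x, y) ∈ E) with hOC
      have hOCne : OC.Nonempty := by
        refine ⟨V.filter (fun x => Reach E v x ∧ Reach E x v), ?_⟩
        rw [hOC, Finset.mem_filter]
        refine ⟨Finset.mem_powerset.2 (Finset.filter_subset _ _), ⟨v, ?_⟩, ?_⟩
        · exact Finset.mem_filter.2 ⟨hvV, Relation.ReflTransGen.refl, Relation.ReflTransGen.refl⟩
        · intro x hx
          obtain ⟨hxV, hvx, hxv⟩ := Finset.mem_filter.1 hx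
          have hxu : Reach E x u := hxv.trans hr₀
          rcases Relation.ReflTransGen.cases_head hxu with heq | ⟨y, hstep, hyu⟩
          · -- x = u, use arc (u,v)
            subst heq
            refine ⟨v, ?_, he₀'⟩
            exact Finset.mem_filter.2 ⟨hvV, Relation.ReflTransGen.refl, Relation.ReflTransGen.refl⟩
          · refine ⟨y, ?_, hstep⟩
            have hyv : Reach E y v := hyu.trans (Relation.ReflTransGen.single he₀')
            have hvy : Reach E v y := hvx.trans (Relation.ReflTransGen.single hstep)
            have hyV : y ∈ V := (hG (x, y) hstep).2.1
            exact Finset.mem_filter.2 ⟨hyV, hvy, hyv⟩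
      obtain ⟨W, hWOC, hWmin⟩ := Finset.exists_min_image OC Finset.card hOCne
      rw [hOC, Finset.mem_filter] at hWOC
      obtain ⟨hWpow, hWne, hWout⟩ := hWOC
      have hWV : W ⊆ V := Finset.mem_powerset.1 hWpow
      -- successor function
      set nxt : α → α := fun x => if h : ∃ y, y ∈ W ∧ (x, y) ∈ E then h.choose else x with hnxtdef
      have hnxt : ∀ x ∈ W, nxt x ∈ W ∧ (x, nxt x) ∈ E := by
        intro x hx
        obtain ⟨y, hy, hxy⟩ := hWout x hx
        have hex : ∃ y, y ∈ W ∧ (x, y) ∈ E := ⟨y, hy, hxy⟩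
        rw [hnxtdef]
        simp only [dif_pos hex]
        exact ⟨hex.choose_spec.1, hex.choose_spec.2⟩
      have hiter : ∀ x ∈ W, ∀ j : ℕ, nxt^[j] x ∈ W := by
        intro x hx j
        induction j with
        | zero => simpa using hx
        | succ j hj => rw [Function.iterate_succ_apply']; exact (hnxt _ hj).1
      -- minimality gives: every orbit is everything
      have horb : ∀ w ∈ W, ∀ w' ∈ W, ∃ j, nxt^[j] w = w' := by
        intro w hw w' hw'
        set O := W.filter (fun x => ∃ j, nxt^[j] w = x) with hO
        have hOW : O ⊆ W := Finset.filter_subset _ _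
        have hOOC : O ∈ OC := by
          rw [hOC, Finset.mem_filter]
          refine ⟨Finset.mem_powerset.2 (hOW.trans hWV), ⟨w, ?_⟩, ?_⟩
          · exact Finset.mem_filter.2 ⟨hw, 0, rfl⟩
          · intro x hx
            obtain ⟨hxW, j, hj⟩ := Finset.mem_filter.1 hx
            refine ⟨nxt x, ?_, (hnxt x hxW).2⟩
            refine Finset.mem_filter.2 ⟨(hnxt x hxW).1, j + 1, ?_⟩
            rw [Function.iterate_succ_apply', hj]
        have := hWmin O hOOC
        have hOeq : O = W := Finset.eq_of_subset_of_card_le hOW this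
        have : w' ∈ O := hOeq.symm ▸ hw'
        exact (Finset.mem_filter.1 this).2
      -- cycle arcs
      set A := W.image (fun x => (x, nxt x)) with hA
      have hAE : A ⊆ E := by
        intro a ha
        obtain ⟨x, hx, rfl⟩ := Finset.mem_image.1 ha
        exact (hnxt x hx).2
      have hAW : ∀ a ∈ A, a.1 ∈ W ∧ a.2 ∈ W := by
        intro a ha
        obtain ⟨x, hx, rfl⟩ := Finset.mem_image.1 ha
        exact ⟨hx, (hnxt x hx).1⟩
      have hAcard : A.card ≤ W.card := Finset.card_image_le
      have hreachA : ∀ w ∈ W, ∀ j : ℕ, Reach A w (nxt^[j] w) := by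
        intro w hw j
        induction j with
        | zero => exact Relation.ReflTransGen.refl
        | succ j hj =>
          rw [Function.iterate_succ_apply']
          refine hj.tail ?_
          show (nxt^[j] w, nxt (nxt^[j] w)) ∈ A
          exact Finset.mem_image.2 ⟨nxt^[j] w, hiter w hw j, rfl⟩
      have hreachAany : ∀ w ∈ W, ∀ w' ∈ W, Reach A w w' := by
        intro w hw w' hw'
        obtain ⟨j, hj⟩ := horb w hw w' hw'
        exact hj ▸ hreachA w hw j
      -- k ≥ 2
      obtain ⟨x₀, hx₀⟩ := hWne
      have hx₀ne : x₀ ≠ nxt x₀ := (hG _ (hnxt x₀ hx₀).2).2.2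
      have hk2 : 2 ≤ W.card := Finset.one_lt_card.2 ⟨x₀, hx₀, nxt x₀, (hnxt x₀ hx₀).1, hx₀ne⟩
      -- internal arcs are cycle arcs
      set internal := E.filter (fun a => a.1 ∈ W ∧ a.2 ∈ W) with hinternal
      have hint_sub_A : internal ⊆ A := by
        intro a ha
        obtain ⟨haE, ha1, ha2⟩ := Finset.mem_filter.1 ha
        by_contra hnA
        apply hNA a haE
        have hsub : A ⊆ E.erase a := by
          intro f hf
          exact Finset.mem_erase.2 ⟨fun hfa => hnA (hfa ▸ hf), hAE hf⟩
        exact reach_mono hsub (by rw [show a = (a.1, a.2) from rfl] at *; exact hreachAany a.1 ha1 a.2 ha2)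
      have hintcard : internal.card ≤ W.card :=
        le_trans (Finset.card_le_card hint_sub_A) hAcard
      -- cross-arc uniqueness
      have huniq_in : ∀ w c c', w ∉ W → c ∈ W → c' ∈ W → (w, c) ∈ E → (w, c') ∈ E → c = c' := by
        intro w c c' hw hc hc' h1 h2
        by_contra hne
        apply hNA (w, c') h2
        refine Relation.ReflTransGen.head (b := c) ?_ ?_
        · exact Finset.mem_erase.2 ⟨pne₂ hne, h1⟩
        · refine reach_mono ?_ (hreachAany c hc c' hc')
          intro f hf
          refine Finset.mem_erase.2 ⟨?_, hAE hf⟩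
          intro hfe
          apply hw
          have hmem := (hAW f hf).1
          rw [hfe] at hmem
          exact hmem
      have huniq_out : ∀ w c c', w ∉ W → c ∈ W → c' ∈ W → (c, w) ∈ E → (c', w) ∈ E → c = c' := by
        intro w c c' hw hc hc' h1 h2
        by_contra hne
        apply hNA (c, w) h1
        refine Relation.ReflTransGen.tail (b := c') ?_ ?_
        · refine reach_mono ?_ (hreachAany c hc c' hc')
          intro f hf
          refine Finset.mem_erase.2 ⟨?_, hAE hf⟩
          intro hfe
          apply hw
          have hmem := (hAW f hf).2
          rw [hfe] at hmem
          exact hmem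
        · exact Finset.mem_erase.2 ⟨pne₁ (Ne.symm hne), h2⟩
      -- contraction
      set w₀ := x₀ with hw₀def
      set π : α → α := fun x => if x ∈ W then w₀ else x with hπ
      have hπW : ∀ x ∈ W, π x = w₀ := fun x hx => by rw [hπ]; exact if_pos hx
      have hπnW : ∀ x, x ∉ W → π x = x := fun x hx => by rw [hπ]; exact if_neg hx
      have hπeq : ∀ x y, π x = π y → x = y ∨ (x ∈ W ∧ y ∈ W) := by
        intro x y hxy
        by_cases hx : x ∈ W <;> by_cases hy : y ∈ W
        · exact Or.inr ⟨hx, hy⟩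
        · exfalso; rw [hπW x hx, hπnW y hy] at hxy; exact hy (hxy ▸ hx₀)
        · exfalso; rw [hπnW x hx, hπW y hy] at hxy; exact hx (hxy ▸ hx₀)
        · rw [hπnW x hx, hπnW y hy] at hxy; exact Or.inl hxy
      set V' := V.image π with hV'
      have hV'eq : V' = insert w₀ (V \ W) := by
        rw [hV']
        ext z
        simp only [Finset.mem_image, Finset.mem_insert, Finset.mem_sdiff]
        constructor
        · rintro ⟨x, hxV, rfl⟩
          by_cases hx : x ∈ W
          · rw [hπW x hx]; exact Or.inl rfl
          · rw [hπnW x hx]; exact Or.inr ⟨hxV, hx⟩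
        · rintro (rfl | ⟨hzV, hzW⟩)
          · exact ⟨w₀, hWV hx₀, hπW w₀ hx₀⟩
          · exact ⟨z, hzV, hπnW z hzW⟩
      have hV'card : V'.card = V.card - W.card + 1 := by
        rw [hV'eq, Finset.card_insert_of_notMem (by simp only [Finset.mem_sdiff]; intro h; exact h.2 hx₀), Finset.card_sdiff_of_subset hWV]
      set nonint := E.filter (fun a => ¬ (a.1 ∈ W ∧ a.2 ∈ W)) with hnonint
      have hcount : internal.card + nonint.card = E.card :=
        Finset.card_filter_add_card_filter_not _
      set E' := (E.image (Prod.map π π)).filter (fun a => a.1 ≠ a.2) with hE'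
      have hπim : ∀ a : α × α, a ∈ nonint → (Prod.map π π a).1 ≠ (Prod.map π π a).2 := by
        intro a ha
        obtain ⟨haE, hap⟩ := Finset.mem_filter.1 ha
        push_neg at hap
        obtain ⟨h1, h2, hne⟩ := hG a haE
        by_cases ha1 : a.1 ∈ W
        · have ha2 : a.2 ∉ W := hap ha1
          simp only [Prod.map_fst, Prod.map_snd]
          rw [hπW _ ha1, hπnW _ ha2]
          intro h; exact ha2 (h ▸ hx₀)
        · simp only [Prod.map_fst, Prod.map_snd]
          rw [hπnW _ ha1]
          by_cases ha2 : a.2 ∈ W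
          · rw [hπW _ ha2]
            intro h; exact ha1 (h.symm ▸ hx₀)
          · rw [hπnW _ ha2]; exact hne
      have hE'eq : E' = nonint.image (Prod.map π π) := by
        rw [hE']
        ext a'
        simp only [Finset.mem_filter, Finset.mem_image]
        constructor
        · rintro ⟨⟨a, haE, rfl⟩, hne⟩
          refine ⟨a, ?_, rfl⟩
          rw [hnonint, Finset.mem_filter]
          refine ⟨haE, ?_⟩
          rintro ⟨h1, h2⟩
          apply hne
          simp only [Prod.map_fst, Prod.map_snd]
          rw [hπW _ h1, hπW _ h2]
        · rintro ⟨a, ha, rfl⟩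
          exact ⟨⟨a, (Finset.mem_filter.1 ha).1, rfl⟩, hπim a ha⟩
      have hinj : Set.InjOn (Prod.map π π) nonint := by
        intro a ha b hb hab
        obtain ⟨haE, hap⟩ := Finset.mem_filter.1 (Finset.mem_coe.1 ha)
        obtain ⟨hbE, hbp⟩ := Finset.mem_filter.1 (Finset.mem_coe.1 hb)
        push_neg at hap hbp
        have h1 : π a.1 = π b.1 := congrArg Prod.fst hab
        have h2 : π a.2 = π b.2 := congrArg Prod.snd hab
        rcases hπeq _ _ h1 with he1 | ⟨hw1, hw2⟩
        · -- a.1 = b.1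
          rcases hπeq _ _ h2 with he2 | ⟨hv1, hv2⟩
          · exact Prod.ext he1 he2
          · -- a.2, b.2 ∈ W: then a.1 ∉ W (nonint), b.1 ∉ W
            have ha1 : a.1 ∉ W := fun h => (hap h) hv1
            have heq : a.2 = b.2 := by
              apply huniq_in a.1 a.2 b.2 ha1 hv1 hv2
              · exact (show (a.1, a.2) = a from rfl) ▸ haE
              · have : (b.1, b.2) ∈ E := (show (b.1, b.2) = b from rfl) ▸ hbE
                rw [← he1] at this
                exact this
            exact Prod.ext he1 heq
        · -- a.1, b.1 ∈ W: a.2 ∉ W, b.2 ∉ W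
          have ha2 : a.2 ∉ W := hap hw1
          have hb2 : b.2 ∉ W := hbp hw2
          rw [hπnW _ ha2, hπnW _ hb2] at h2
          have heq : a.1 = b.1 := by
            apply huniq_out a.2 a.1 b.1 ha2 hw1 hw2
            · exact (show (a.1, a.2) = a from rfl) ▸ haE
            · have : (b.1, b.2) ∈ E := (show (b.1, b.2) = b from rfl) ▸ hbE
              rw [← h2] at this
              exact this
          exact Prod.ext heq h2
      have hE'card : E'.card = nonint.card := by
        rw [hE'eq, Finset.card_image_of_injOn hinj]
      have hGood' : Good V' E' := by
        intro a' ha'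
        rw [hE'eq] at ha'
        obtain ⟨a, ha, rfl⟩ := Finset.mem_image.1 ha'
        have haE := (Finset.mem_filter.1 ha).1
        obtain ⟨h1, h2, _⟩ := hG a haE
        exact ⟨Finset.mem_image.2 ⟨a.1, h1, rfl⟩, Finset.mem_image.2 ⟨a.2, h2, rfl⟩, hπim a ha⟩
      have hNoAlt' : NoAlt E' := by
        intro e' he' hre'
        have he'im := hE'eq ▸ he'
        obtain ⟨es, hes, hesim⟩ := Finset.mem_image.1 he'im
        have hesE : es ∈ E := (Finset.mem_filter.1 hes).1
        have hes_nonint : ¬ (es.1 ∈ W ∧ es.2 ∈ W) := by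
          have := (Finset.mem_filter.1 hes).2
          exact this
        have hAes : A ⊆ E.erase es := by
          intro f hf
          refine Finset.mem_erase.2 ⟨?_, hAE hf⟩
          intro hfe
          apply hes_nonint
          have := hAW f hf
          rw [hfe] at this
          exact this
        have hbridge : ∀ x y, π x = π y → Reach (E.erase es) x y := by
          intro x y hxy
          rcases hπeq _ _ hxy with rfl | ⟨hx, hy⟩
          · exact Relation.ReflTransGen.refl
          · exact reach_mono hAes (hreachAany x hx y hy)
        have hlift : ∀ a' b', Relation.ReflTransGen (Step (E'.erase e')) a' b' →
            ∀ a, π a = a' → ∃ b, π b = b' ∧ Reach (E.erase es) a b := by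
          intro a' b' h
          induction h using Relation.ReflTransGen.head_induction_on with
          | refl => exact fun a ha => ⟨a, ha, Relation.ReflTransGen.refl⟩
          | head hstep hrest IH =>
            rename_i x' c'
            intro a ha
            have hstep' : (x', c') ∈ E'.erase e' := hstep
            obtain ⟨hne', hmem'⟩ := Finset.mem_erase.1 hstep'
            have : (x', c') ∈ nonint.image (Prod.map π π) := hE'eq ▸ hmem'
            obtain ⟨f, hf, hfim⟩ := Finset.mem_image.1 this
            have hfE : f ∈ E := (Finset.mem_filter.1 hf).1
            have hffne : f ≠ es := by
              intro hq
              apply hne'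
              rw [← hfim, hq, hesim]
            have hf1 : π f.1 = x' := congrArg Prod.fst hfim
            have hf2 : π f.2 = c' := congrArg Prod.snd hfim
            have hb1 : Reach (E.erase es) a f.1 := hbridge a f.1 (ha.trans hf1.symm)
            have hb2 : Reach (E.erase es) f.1 f.2 := by
              refine Relation.ReflTransGen.single ?_
              show (f.1, f.2) ∈ E.erase es
              exact Finset.mem_erase.2 ⟨by simpa using hffne, by simpa using hfE⟩
            obtain ⟨b, hb, hres⟩ := IH f.2 hf2
            exact ⟨b, hb, (hb1.trans hb2).trans hres⟩
        have h1 : π es.1 = e'.1 := congrArg Prod.fst hesim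
        have h2 : π es.2 = e'.2 := congrArg Prod.snd hesim
        obtain ⟨b, hbim, hres⟩ := hlift e'.1 e'.2 hre' es.1 h1
        have hfin : Reach (E.erase es) es.1 es.2 :=
          hres.trans (hbridge b es.2 (hbim.trans h2.symm))
        exact hNA es hesE hfin
      -- apply induction hypothesis
      have hkV : W.card ≤ V.card := Finset.card_le_card hWV
      have hV'le : V'.card ≤ n := by omega
      have hIH : E'.card ≤ Bnd V'.card := ih V' E' hV'le hGood' hNoAlt'
      have hstep := bnd_step (m := V.card) (k := W.card) hk2 hkV
      have hV'c2 : V'.card = V.card - W.card + 1 := hV'card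
      calc E.card = internal.card + nonint.card := hcount.symm
      _ ≤ W.card + E'.card := by omega
      _ ≤ W.card + Bnd (V.card - W.card + 1) := by rw [← hV'c2]; omega
      _ ≤ Bnd V.card := by omega

lemma bnd_le (m : ℕ) : 4 * Bnd m ≤ m * m + 9 := by
  by_cases h1 : m ≤ 1
  · simp [Bnd, h1]
  · by_cases h2 : m = 2
    · subst h2; norm_num [Bnd]
    · have h : Bnd m = m * m / 4 + 2 := by unfold Bnd; rw [if_neg h1, if_neg h2]
      omega

/-- In a walk from a set containing i to one not containing i, some step drops i. -/
lemma exit_step {r : Finset ℕ → Finset ℕ → Prop} {i : ℕ} :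
    ∀ {a b : Finset ℕ}, Relation.ReflTransGen r a b → i ∈ a → i ∉ b →
    ∃ c d, r c d ∧ i ∈ c ∧ i ∉ d := by
  intro a b h
  induction h using Relation.ReflTransGen.head_induction_on with
  | refl => intro h1 h2; exact absurd h1 h2
  | head hstep hrest IH =>
    rename_i x c
    intro hx hb
    by_cases hc : i ∈ c
    · exact IH hc hb
    · exact ⟨x, c, hstep, hx, hc⟩

/-- Key combinatorial lemma: if the family is small, some coordinate is not a
singleton difference. -/
lemma exists_good_coord (F : Finset (Finset ℕ)) (n₀ : ℕ) (h2 : 2 ≤ n₀)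
    (hsize : F.card * F.card < 4 * (n₀ - 2)) :
    ∃ i ∈ Finset.Icc 1 n₀, ∀ A ∈ F, ∀ B ∈ F, A \ B ≠ {i} := by
  by_contra hcon
  push_neg at hcon
  classical
  -- choice of a witnessing pair for each coordinate
  set f : ℕ → (Finset ℕ × Finset ℕ) := fun i =>
    if h' : ∃ p : Finset ℕ × Finset ℕ, p.1 ∈ F ∧ p.2 ∈ F ∧ p.1 \ p.2 = {i}
    then h'.choose else (∅, ∅) with hfdef
  have hf : ∀ i ∈ Finset.Icc 1 n₀, (f i).1 ∈ F ∧ (f i).2 ∈ F ∧ (f i).1 \ (f i).2 = {i} := by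
    intro i hi
    obtain ⟨A, hA, B, hB, hAB⟩ := hcon i hi
    have h' : ∃ p : Finset ℕ × Finset ℕ, p.1 ∈ F ∧ p.2 ∈ F ∧ p.1 \ p.2 = {i} :=
      ⟨(A, B), hA, hB, hAB⟩
    rw [hfdef]
    simp only [dif_pos h']
    exact h'.choose_spec
  set E : Finset (Finset ℕ × Finset ℕ) := (Finset.Icc 1 n₀).image f with hE
  have hfinj : Set.InjOn f (Finset.Icc 1 n₀) := by
    intro i hi j hj hij
    have h1 := (hf i (Finset.mem_coe.1 hi)).2.2
    have h2 := (hf j (Finset.mem_coe.1 hj)).2.2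
    rw [hij] at h1
    rw [h1] at h2
    exact Finset.singleton_injective h2
  have hEcard : E.card = n₀ := by
    rw [hE, Finset.card_image_of_injOn hfinj, Nat.card_Icc]
    omega
  have hGood : Good F E := by
    intro e he
    obtain ⟨i, hi, rfl⟩ := Finset.mem_image.1 he
    obtain ⟨hA, hB, hAB⟩ := hf i hi
    refine ⟨hA, hB, ?_⟩
    intro heq
    rw [heq] at hAB
    simp only [Finset.sdiff_self] at hAB
    exact (Finset.singleton_ne_empty i) hAB.symm
  have hNA : NoAlt E := by
    intro e he hre
    obtain ⟨i, hi, rfl⟩ := Finset.mem_image.1 he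
    obtain ⟨hA, hB, hAB⟩ := hf i hi
    have hiA : i ∈ (f i).1 := by
      have : i ∈ (f i).1 \ (f i).2 := by rw [hAB]; exact Finset.mem_singleton_self i
      exact (Finset.mem_sdiff.1 this).1
    have hiB : i ∉ (f i).2 := by
      have : i ∈ (f i).1 \ (f i).2 := by rw [hAB]; exact Finset.mem_singleton_self i
      exact (Finset.mem_sdiff.1 this).2
    obtain ⟨C, D, hstep, hiC, hiD⟩ := exit_step hre hiA hiB
    have hCD : (C, D) ∈ E.erase (f i) := hstep
    obtain ⟨hne, hmem⟩ := Finset.mem_erase.1 hCD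
    obtain ⟨j, hj, hjeq⟩ := Finset.mem_image.1 hmem
    have hlab := (hf j hj).2.2
    rw [hjeq] at hlab
    have : i ∈ C \ D := Finset.mem_sdiff.2 ⟨hiC, hiD⟩
    rw [hlab] at this
    have hij : i = j := Finset.mem_singleton.1 this
    apply hne
    rw [← hjeq, ← hij]
  have hbound : E.card ≤ Bnd F.card := digraph_bound F.card F E le_rfl hGood hNA
  have hb4 := bnd_le F.card
  have hsq := sq_mod_four F.card
  rw [hEcard] at hbound
  -- arithmetic contradiction
  set m := F.card
  set M := m * m with hM
  clear_value M
  omega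

section Blowup

variable {P F₀ : Finset (Finset ℕ)} {n₀ N : ℕ}

lemma blowup (hN : n₀ ≤ N) (hsat : InducedSaturated n₀ P F₀) {i : ℕ}
    (hi : i ∈ Finset.Icc 1 n₀) (hgood : ∀ A ∈ F₀, ∀ B ∈ F₀, A \ B ≠ {i}) :
    ∃ F : Finset (Finset ℕ), InducedSaturated N P F ∧ F.card = F₀.card := by
  classical
  obtain ⟨hbdd, hfree, hins⟩ := hsat
  obtain ⟨hi1, hi2⟩ := Finset.mem_Icc.1 hi
  set I : Finset ℕ := Finset.Icc 1 n₀ with hI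
  set J : Finset ℕ := Finset.Icc (n₀ + 1) N with hJ
  have hIJ : ∀ x, x ∈ I → x ∈ J → False := by
    intro x h1 h2
    rw [hI, Finset.mem_Icc] at h1
    rw [hJ, Finset.mem_Icc] at h2
    omega
  have hIN : ∀ x, x ∈ Finset.Icc 1 N ↔ (x ∈ I ∨ x ∈ J) := by
    intro x
    rw [hI, hJ, Finset.mem_Icc, Finset.mem_Icc, Finset.mem_Icc]
    omega
  set β : Finset ℕ → Finset ℕ := fun A => if i ∈ A then A ∪ J else A with hβ
  have hβ' : ∀ A, β A = if i ∈ A then A ∪ J else A := fun A => rfl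
  have hβmem : ∀ A x, x ∈ I → (x ∈ β A ↔ x ∈ A) := by
    intro A x hx
    rw [hβ' A]
    by_cases h : i ∈ A
    · rw [if_pos h, Finset.mem_union]
      constructor
      · rintro (h1 | h1)
        · exact h1
        · exact absurd h1 (fun hc => hIJ x hx hc)
      · exact Or.inl
    · rw [if_neg h]
  have hβres : ∀ A, A ⊆ I → β A ∩ I = A := by
    intro A hA
    ext x
    rw [Finset.mem_inter]
    constructor
    · rintro ⟨h1, h2⟩
      exact (hβmem A x h2).1 h1
    · intro hx
      have hxI : x ∈ I := hA hx
      exact ⟨(hβmem A x hxI).2 hx, hxI⟩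
  have hβsub : ∀ A, A ⊆ I → β A ⊆ Finset.Icc 1 N := by
    intro A hA x hx
    rw [hβ' A] at hx
    by_cases h : i ∈ A
    · rw [if_pos h, Finset.mem_union] at hx
      rcases hx with hx | hx
      · exact (hIN x).2 (Or.inl (hA hx))
      · exact (hIN x).2 (Or.inr hx)
    · rw [if_neg h] at hx
      exact (hIN x).2 (Or.inl (hA hx))
  have hβmono : ∀ A B, A ⊆ B → β A ⊆ β B := by
    intro A B hAB
    rw [hβ' A, hβ' B]
    by_cases h : i ∈ A
    · rw [if_pos h, if_pos (hAB h)]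
      exact Finset.union_subset_union hAB (Finset.Subset.refl _)
    · rw [if_neg h]
      by_cases h2 : i ∈ B
      · rw [if_pos h2]
        exact hAB.trans Finset.subset_union_left
      · rw [if_neg h2]
        exact hAB
  have hβle : ∀ A B, A ⊆ I → B ⊆ I → (β A ⊆ β B ↔ A ⊆ B) := by
    intro A B hA hB
    constructor
    · intro h
      have := hβres A hA ▸ (Finset.inter_subset_inter h (Finset.Subset.refl I))
      rw [hβres B hB] at this
      calc A = β A ∩ I := (hβres A hA).symm
      _ ⊆ β B ∩ I := Finset.inter_subset_inter h (Finset.Subset.refl I)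
      _ = B := hβres B hB
    · exact hβmono A B
  have hβinj : ∀ A B, A ⊆ I → B ⊆ I → β A = β B → A = B := by
    intro A B hA hB h
    rw [← hβres A hA, ← hβres B hB, h]
  set F : Finset (Finset ℕ) := F₀.image β with hF
  have hFcard : F.card = F₀.card := by
    rw [hF]
    apply Finset.card_image_of_injOn
    intro A hA B hB h
    exact hβinj A B (hbdd A (Finset.mem_coe.1 hA)) (hbdd B (Finset.mem_coe.1 hB)) h
  refine ⟨F, ⟨?_, ?_, ?_⟩, hFcard⟩
  · -- bounded
    intro A hA
    obtain ⟨C, hC, rfl⟩ := Finset.mem_image.1 hA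
    exact hβsub C (hbdd C hC)
  · -- P-free
    rintro ⟨φ, hφinj, hφmem, hφiff⟩
    apply hfree
    refine ⟨fun p => φ p ∩ I, ?_, ?_, ?_⟩
    · intro p hp q hq h
      simp only [] at h
      have hpm := hφmem p (Finset.mem_coe.1 hp)
      have hqm := hφmem q (Finset.mem_coe.1 hq)
      obtain ⟨C, hC, hCe⟩ := Finset.mem_image.1 hpm
      obtain ⟨D, hD, hDe⟩ := Finset.mem_image.1 hqm
      apply hφinj hp hq
      rw [← hCe, ← hDe] at h ⊢
      rw [hβres C (hbdd C hC), hβres D (hbdd D hD)] at h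
      rw [h]
    · intro p hp
      obtain ⟨C, hC, hCe⟩ := Finset.mem_image.1 (hφmem p hp)
      show φ p ∩ I ∈ F₀
      rw [← hCe, hβres C (hbdd C hC)]
      exact hC
    · intro p hp q hq
      obtain ⟨C, hC, hCe⟩ := Finset.mem_image.1 (hφmem p hp)
      obtain ⟨D, hD, hDe⟩ := Finset.mem_image.1 (hφmem q hq)
      show φ p ∩ I ⊆ φ q ∩ I ↔ p ⊆ q
      rw [← hCe, ← hDe, hβres C (hbdd C hC), hβres D (hbdd D hD)]
      rw [← hφiff p hp q hq, ← hCe, ← hDe]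
      exact (hβle C D (hbdd C hC) (hbdd D hD)).symm
  · -- saturation
    intro S hS hSF
    by_cases hcase : (i ∈ S ∧ J ⊆ S) ∨ (i ∉ S ∧ ∀ x ∈ J, x ∉ S)
    · -- compatible case
      set T := S ∩ I with hT
      have hTsub : T ⊆ I := Finset.inter_subset_right
      have hβT : β T = S := by
        rcases hcase with ⟨hiS, hJS⟩ | ⟨hiS, hJS⟩
        · have hiT : i ∈ T := Finset.mem_inter.2 ⟨hiS, hi⟩
          rw [hβ' T, if_pos hiT]
          ext x
          rw [Finset.mem_union]
          constructor
          · rintro (hx | hx)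
            · exact (Finset.mem_inter.1 hx).1
            · exact hJS hx
          · intro hx
            rcases (hIN x).1 (hS hx) with h | h
            · exact Or.inl (Finset.mem_inter.2 ⟨hx, h⟩)
            · exact Or.inr h
        · have hiT : i ∉ T := fun h => hiS (Finset.mem_inter.1 h).1
          rw [hβ' T, if_neg hiT]
          ext x
          constructor
          · intro hx; exact (Finset.mem_inter.1 hx).1
          · intro hx
            rcases (hIN x).1 (hS hx) with h | h
            · exact Finset.mem_inter.2 ⟨hx, h⟩
            · exact absurd hx (hJS x h)
      have hTF : T ∉ F₀ := by
        intro h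
        exact hSF (hβT ▸ Finset.mem_image.2 ⟨T, h, rfl⟩)
      obtain ⟨φ₀, hφinj, hφmem, hφiff⟩ := hins T hTsub hTF
      have hall : ∀ C ∈ insert T F₀, C ⊆ I := by
        intro C hC
        rcases Finset.mem_insert.1 hC with rfl | hC
        · exact hTsub
        · exact hbdd C hC
      refine ⟨fun p => β (φ₀ p), ?_, ?_, ?_⟩
      · intro p hp q hq h
        apply hφinj hp hq
        exact hβinj _ _ (hall _ (hφmem p (Finset.mem_coe.1 hp))) (hall _ (hφmem q (Finset.mem_coe.1 hq))) h
      · intro p hp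
        show β (φ₀ p) ∈ insert S F
        rcases Finset.mem_insert.1 (hφmem p hp) with h | h
        · rw [h, hβT]; exact Finset.mem_insert_self _ _
        · exact Finset.mem_insert_of_mem (Finset.mem_image.2 ⟨φ₀ p, h, rfl⟩)
      · intro p hp q hq
        show β (φ₀ p) ⊆ β (φ₀ q) ↔ p ⊆ q
        rw [hβle _ _ (hall _ (hφmem p hp)) (hall _ (hφmem q hq))]
        exact hφiff p hp q hq
    · -- mixed case
      set X := (S ∩ I).erase i with hX
      have hXsub : X ⊆ I := (Finset.erase_subset _ _).trans Finset.inter_subset_right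
      have hXS : X ⊆ S := (Finset.erase_subset _ _).trans Finset.inter_subset_left
      have hiX : i ∉ X := Finset.notMem_erase _ _
      -- the two key formulas
      have hdown : ∀ C, C ⊆ I → (β C ⊆ S ↔ C ⊆ X) := by
        intro C hC
        constructor
        · intro h
          have hiC : i ∉ C := by
            intro hiC
            by_cases hiS : i ∈ S
            · -- then ¬ J ⊆ S
              have h1 := not_or.1 hcase
              have hnJS : ¬ J ⊆ S := by
                intro hJS
                exact h1.1 ⟨hiS, hJS⟩
              apply hnJS
              intro x hx
              apply h
              rw [hβ' C, if_pos hiC]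
              exact Finset.mem_union_right _ hx
            · -- i ∉ S but i ∈ β C ⊆ S
              apply hiS
              apply h
              rw [hβ' C, if_pos hiC]
              exact Finset.mem_union_left _ hiC
          rw [hβ' C, if_neg hiC] at h
          intro x hx
          rw [hX, Finset.mem_erase]
          refine ⟨fun he => hiC (he ▸ hx), Finset.mem_inter.2 ⟨h hx, hC hx⟩⟩
        · intro h
          have hiC : i ∉ C := fun hc => hiX (h hc)
          rw [hβ' C, if_neg hiC]
          exact h.trans hXS
      have hup : ∀ C, C ⊆ I → (S ⊆ β C ↔ insert i X ⊆ C) := by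
        intro C hC
        constructor
        · intro h
          have hiC : i ∈ C := by
            obtain ⟨h1, h2⟩ := not_or.1 hcase
            by_cases hiS : i ∈ S
            · have := h hiS
              rw [hβ' C] at this
              by_cases hc : i ∈ C
              · exact hc
              · rw [if_neg hc] at this; exact absurd this hc
            · -- ∃ x ∈ J ∩ S
              have hex : ∃ x ∈ J, x ∈ S := by
                by_contra hno
                push_neg at hno
                exact h2 ⟨hiS, hno⟩
              obtain ⟨x, hxJ, hxS⟩ := hex
              have := h hxS
              rw [hβ' C] at this
              by_cases hc : i ∈ C
              · exact hc
              · rw [if_neg hc] at this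
                exact absurd hxJ (fun hj => hIJ x (hC this) hj)
          refine Finset.insert_subset hiC ?_
          intro x hx
          have hxS : x ∈ S := hXS hx
          have := h hxS
          rw [hβ' C, if_pos hiC, Finset.mem_union] at this
          rcases this with h' | h'
          · exact h'
          · exact absurd h' (fun hj => hIJ x (hXsub hx) hj)
        · intro h
          have hiC : i ∈ C := h (Finset.mem_insert_self _ _)
          have hXC : X ⊆ C := (Finset.subset_insert _ _).trans h
          intro x hx
          rw [hβ' C, if_pos hiC, Finset.mem_union]
          rcases (hIN x).1 (hS hx) with hxI | hxJ
          · left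
            by_cases hxi : x = i
            · exact hxi ▸ hiC
            · exact hXC (Finset.mem_erase.2 ⟨hxi, Finset.mem_inter.2 ⟨hx, hxI⟩⟩)
          · exact Or.inr hxJ
      have transfer : ∀ T : Finset ℕ, T ⊆ I → T ∉ F₀ →
          (∀ C ∈ F₀, (C ⊆ T ↔ β C ⊆ S)) → (∀ C ∈ F₀, (T ⊆ C ↔ S ⊆ β C)) →
          ContainsInduced P (insert S F) := by
        intro T hTsub hTF htd htu
        obtain ⟨φ₀, hφinj, hφmem, hφiff⟩ := hins T hTsub hTF
        have hmemF : ∀ p, p ∈ P → φ₀ p ≠ T → φ₀ p ∈ F₀ := by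
          intro p hp hne
          rcases Finset.mem_insert.1 (hφmem p hp) with h | h
          · exact absurd h hne
          · exact h
        refine ⟨fun p => if φ₀ p = T then S else β (φ₀ p), ?_, ?_, ?_⟩
        · intro p hp q hq h
          simp only [] at h
          by_cases h1 : φ₀ p = T <;> by_cases h2 : φ₀ q = T
          · exact hφinj hp hq (h1.trans h2.symm)
          · rw [if_pos h1, if_neg h2] at h
            exact absurd (h ▸ Finset.mem_image.2 ⟨φ₀ q, hmemF q hq h2, rfl⟩) hSF
          · rw [if_neg h1, if_pos h2] at h
            exact absurd (h ▸ Finset.mem_image.2 ⟨φ₀ p, hmemF p hp h1, rfl⟩) hSF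
          · rw [if_neg h1, if_neg h2] at h
            apply hφinj hp hq
            exact hβinj _ _ (hbdd _ (hmemF p hp h1)) (hbdd _ (hmemF q hq h2)) h
        · intro p hp
          show (if φ₀ p = T then S else β (φ₀ p)) ∈ insert S F
          by_cases h1 : φ₀ p = T
          · rw [if_pos h1]; exact Finset.mem_insert_self _ _
          · rw [if_neg h1]
            exact Finset.mem_insert_of_mem (Finset.mem_image.2 ⟨φ₀ p, hmemF p hp h1, rfl⟩)
        · intro p hp q hq
          show (if φ₀ p = T then S else β (φ₀ p)) ⊆ (if φ₀ q = T then S else β (φ₀ q)) ↔ p ⊆ q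
          by_cases h1 : φ₀ p = T <;> by_cases h2 : φ₀ q = T
          · rw [if_pos h1, if_pos h2]
            have hpq : p = q := hφinj hp hq (h1.trans h2.symm)
            subst hpq
            simp
          · rw [if_pos h1, if_neg h2]
            rw [← hφiff p hp q hq, h1]
            exact (htu _ (hmemF q hq h2)).symm
          · rw [if_neg h1, if_pos h2]
            rw [← hφiff p hp q hq, h2]
            exact (htd _ (hmemF p hp h1)).symm
          · rw [if_neg h1, if_neg h2]
            rw [← hφiff p hp q hq]
            exact hβle _ _ (hbdd _ (hmemF p hp h1)) (hbdd _ (hmemF q hq h2))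
      -- choose T according to sub-case
      by_cases hB1 : ∃ C ∈ F₀, i ∈ C ∧ C ⊆ insert i X
      · -- B2 case: use T = X
        obtain ⟨C₀, hC₀F, hiC₀, hC₀sub⟩ := hB1
        have hkey : ∀ B' ∈ F₀, X ⊆ B' → i ∈ B' := by
          intro B' hB' hXB'
          by_contra hiB'
          apply hgood C₀ hC₀F B' hB'
          ext x
          rw [Finset.mem_sdiff, Finset.mem_singleton]
          constructor
          · rintro ⟨hx1, hx2⟩
            rcases Finset.mem_insert.1 (hC₀sub hx1) with h | h
            · exact h
            · exact absurd (hXB' h) hx2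
          · rintro rfl
            exact ⟨hiC₀, hiB'⟩
        have hTF : X ∉ F₀ := fun h => hiX (hkey X h (Finset.Subset.refl X))
        have htd : ∀ C ∈ F₀, (C ⊆ X ↔ β C ⊆ S) := fun C hC => (hdown C (hbdd C hC)).symm
        have htu : ∀ C ∈ F₀, (X ⊆ C ↔ S ⊆ β C) := by
          intro C hC
          rw [hup C (hbdd C hC)]
          constructor
          · intro h
            exact Finset.insert_subset (hkey C hC h) h
          · intro h
            exact (Finset.subset_insert _ _).trans h
        exact transfer X hXsub hTF htd htu
      · -- B1 case: use T = insert i X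
        push_neg at hB1
        set T := insert i X with hT
        have hTsub : T ⊆ I := Finset.insert_subset hi hXsub
        have hTF : T ∉ F₀ := by
          intro h
          exact hB1 T h (Finset.mem_insert_self _ _) (Finset.Subset.refl T)
        have htd : ∀ C ∈ F₀, (C ⊆ T ↔ β C ⊆ S) := by
          intro C hC
          rw [hdown C (hbdd C hC)]
          constructor
          · intro h
            have hiC : i ∉ C := fun hc => hB1 C hC hc h
            intro x hx
            rcases Finset.mem_insert.1 (h hx) with rfl | h'
            · exact absurd hx hiC
            · exact h'
          · intro h
            exact h.trans (Finset.subset_insert _ _)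
        have htu : ∀ C ∈ F₀, (T ⊆ C ↔ S ⊆ β C) := fun C hC => (hup C (hbdd C hC)).symm
        exact transfer T hTsub hTF htd htu

end Blowup

lemma exists_saturated (P : Finset (Finset ℕ)) (hP : P.Nonempty) (n : ℕ) :
    ∃ F, InducedSaturated n P F := by
  classical
  set G := (Finset.Icc 1 n).powerset.powerset.filter (fun F => ¬ ContainsInduced P F) with hG
  have hne : G.Nonempty := by
    refine ⟨∅, ?_⟩
    rw [hG, Finset.mem_filter]
    refine ⟨Finset.mem_powerset.2 (Finset.empty_subset _), ?_⟩
    rintro ⟨φ, _, hmem, _⟩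
    obtain ⟨A, hA⟩ := hP
    exact absurd (hmem A hA) (Finset.notMem_empty _)
  obtain ⟨F, hFG, hFmax⟩ := Finset.exists_max_image G Finset.card hne
  rw [hG, Finset.mem_filter] at hFG
  obtain ⟨hFpow, hFfree⟩ := hFG
  have hFbdd : ∀ A ∈ F, A ⊆ Finset.Icc 1 n := by
    intro A hA
    exact Finset.mem_powerset.1 ((Finset.mem_powerset.1 hFpow) hA)
  refine ⟨F, hFbdd, hFfree, ?_⟩
  intro S hSsub hSF
  by_contra hno
  have hmem : insert S F ∈ G := by
    rw [hG, Finset.mem_filter]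
    refine ⟨Finset.mem_powerset.2 ?_, hno⟩
    intro A hA
    rcases Finset.mem_insert.1 hA with rfl | hA
    · exact Finset.mem_powerset.2 hSsub
    · exact (Finset.mem_powerset.1 hFpow) hA
  have := hFmax _ hmem
  rw [Finset.card_insert_of_notMem hSF] at this
  omega

end Dicho

/-- For any poset `P`, either `sat*(n, P)` is bounded by a constant, or
`sat*(n, P) ≥ 2√(n-2)` for all `n ≥ 2`. -/
theorem main_dichotomy (P : Finset (Finset ℕ)) :
    (∃ K : ℕ, ∀ n : ℕ, satStar n P ≤ K) ∨
    (∀ n : ℕ, 2 ≤ n → (satStar n P : ℝ) ≥ 2 * Real.sqrt ((n : ℝ) - 2)) := by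
  rcases Finset.eq_empty_or_nonempty P with rfl | hP
  · -- empty poset: no saturated family exists
    left
    refine ⟨0, fun n => ?_⟩
    have hempty : {k | ∃ F : Finset (Finset ℕ), InducedSaturated n ∅ F ∧ F.card = k} = ∅ := by
      ext k
      simp only [Set.mem_setOf_eq, Set.mem_empty_iff_false, iff_false]
      rintro ⟨F, ⟨_, hfree, _⟩, _⟩
      apply hfree
      refine ⟨id, ?_, ?_, ?_⟩
      · simp
      · simp
      · simp
    rw [satStar, hempty, Nat.sInf_empty]
  · by_cases hbig : ∀ n : ℕ, 2 ≤ n → (satStar n P : ℝ) ≥ 2 * Real.sqrt ((n : ℝ) - 2)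
    · exact Or.inr hbig
    · left
      push_neg at hbig
      obtain ⟨n₀, hn₀2, hlt⟩ := hbig
      have hSne : {k | ∃ F : Finset (Finset ℕ), InducedSaturated n₀ P F ∧ F.card = k}.Nonempty := by
        obtain ⟨F, hF⟩ := Dicho.exists_saturated P hP n₀
        exact ⟨F.card, F, hF, rfl⟩
      obtain ⟨F₀, hF₀sat, hF₀card⟩ := Nat.sInf_mem hSne
      have hF₀c : F₀.card = satStar n₀ P := hF₀card
      -- convert the real inequality
      have hmlt : F₀.card * F₀.card < 4 * (n₀ - 2) := by
        have h1 : (0:ℝ) ≤ (n₀:ℝ) - 2 := by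
          have : (2:ℝ) ≤ (n₀:ℝ) := by exact_mod_cast hn₀2
          linarith
        have h2 : ((satStar n₀ P : ℕ) : ℝ) < 2 * Real.sqrt ((n₀:ℝ) - 2) := hlt
        have h3 : ((satStar n₀ P : ℕ) : ℝ) * ((satStar n₀ P : ℕ) : ℝ) <
            (2 * Real.sqrt ((n₀:ℝ) - 2)) * (2 * Real.sqrt ((n₀:ℝ) - 2)) :=
          mul_self_lt_mul_self (Nat.cast_nonneg _) h2
        rw [mul_mul_mul_comm, Real.mul_self_sqrt h1] at h3
        have h4 : ((n₀:ℝ) - 2) = ((n₀ - 2 : ℕ) : ℝ) := by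
          rw [Nat.cast_sub hn₀2]
          norm_num
        rw [h4] at h3
        rw [hF₀c]
        have := h3
        norm_num at this
        exact_mod_cast this
      obtain ⟨i, hiI, hgood⟩ := Dicho.exists_good_coord F₀ n₀ hn₀2 hmlt
      refine ⟨max (satStar n₀ P) ((Finset.range n₀).sup (fun j => satStar j P)), fun n => ?_⟩
      by_cases hn : n < n₀
      · exact le_max_of_le_right (Finset.le_sup (f := fun j => satStar j P) (Finset.mem_range.2 hn))
      · push_neg at hn
        obtain ⟨F, hFsat, hFcard⟩ := Dicho.blowup hn hF₀sat hiI hgood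
        have hle : satStar n P ≤ F.card := Nat.sInf_le ⟨F, hFsat, rfl⟩
        rw [hFcard, hF₀c] at hle
        exact le_max_of_le_left hle
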